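/- Strong AMC implies AMC: if for every set X there exist an inhabited collection family (Y_i)_{i∈I} and surjections p_i : Y_i ↠ X such that each surjection onto any Y_i is refined by a map Y_{i'} → Y_i over X, then for every set X there is a set {p_i : Y_i ↠ X : i ∈ I} of surjections onto X such that every surjection p : Y ↠ X is refined by some p_i (i.e., there is f : Y_i → Y with p∘f = p_i). -/

import Mathlib

/-- A family `(Y i)_{i ∈ I}` is a collection family if every surjection onto
some member `Y i` is refined by a surjection of the form `Y i' ↠ Y i`. -/
def IsCollectionFamily {I : Type} (Y : I → Type) : Prop :=
  ∀ (i : I) (E : Type) (p : E → Y i), Function.Surjective p →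
    ∃ (i' : I) (q : Y i' → Y i), Function.Surjective q ∧
      ∃ f : Y i' → E, ∀ z, p (f z) = q z

/-- strong AMC (version 2: an inhabited collection family with
surjections to X, refinements over X) implies AMC (the weak form). -/
theorem stmt_3
    (h2 : ∀ X : Type, ∃ (I : Type) (Y : I → Type),
      Nonempty I ∧ IsCollectionFamily Y ∧
      ∃ q : ∀ i, Y i → X,
        (∀ i, Function.Surjective (q i)) ∧
        ∀ (i : I) (E : Type) (p : E → Y i), Function.Surjective p →
          ∃ (i' : I) (r : Y i' → Y i), Function.Surjective r ∧
            (∀ z, q i (r z) = q i' z) ∧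
            ∃ f : Y i' → E, ∀ z, p (f z) = r z) :
    ∀ X : Type, ∃ (I : Type) (Y : I → Type) (p : ∀ i, Y i → X),
      (∀ i, Function.Surjective (p i)) ∧
      ∀ (Z : Type) (g : Z → X), Function.Surjective g →
        ∃ (i : I) (f : Y i → Z), ∀ y, g (f y) = p i y := by
  intro X
  obtain ⟨I, Y, ⟨i0⟩, _, q, hq, href⟩ := h2 X
  refine ⟨I, Y, q, hq, ?_⟩
  intro Z g hg
  -- pullback of g along q i0
  let E := {p : Y i0 × Z // q i0 p.1 = g p.2}
  have hsurj : Function.Surjective (fun e : E => e.1.1) := by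
    intro y
    obtain ⟨z, hz⟩ := hg (q i0 y)
    exact ⟨⟨⟨y, z⟩, hz.symm⟩, rfl⟩
  obtain ⟨i', r, _, hcomm, f, hf⟩ := href i0 E (fun e => e.1.1) hsurj
  refine ⟨i', fun z => (f z).1.2, fun z => ?_⟩
  have := (f z).2
  rw [← this, hf z, hcomm]
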